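/- Let I be an irreducible interval of a MinBudget instance (N, ⊴, c). Then every filter F ⊆ I of ⊴_I with r(F) > r(I) satisfies c(F) ≤ 0. -/

import Mathlib

open List

variable {ι : Type*} [DecidableEq ι]

/-- Total cost of a schedule (list of jobs). -/
def listCost (c : ι → ℝ) (S : List ι) : ℝ := (S.map c).sum

/-- Budget of a schedule: maximum cost of a prefix (the empty prefix has cost 0). -/
def listBudget (c : ι → ℝ) : List ι → ℝ
  | [] => 0
  | j :: t => max 0 (c j + listBudget c t)

/-- Return of a schedule. -/
def listReturn (c : ι → ℝ) (S : List ι) : ℝ := listCost c S - listBudget c S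

/-- `S` enumerates the finite job set `N` without repetition. -/
def IsScheduleOf (N : Finset ι) (S : List ι) : Prop :=
  S.Nodup ∧ ∀ j, j ∈ S ↔ j ∈ N

/-- `S` is a linear extension of the precedence relation `r` (restricted to its jobs). -/
def RespectsOrder (r : ι → ι → Prop) (S : List ι) : Prop :=
  ∀ i j, r i j → i ∈ S → j ∈ S → S.idxOf i ≤ S.idxOf j

/-- Minimum budget over all feasible schedules of the job set `X`. -/
noncomputable def setBudget (r : ι → ι → Prop) (c : ι → ℝ) (X : Finset ι) : ℝ :=
  sInf {b | ∃ S : List ι, IsScheduleOf X S ∧ RespectsOrder r S ∧ listBudget c S = b}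

/-- Total cost of a job set. -/
def setCost (c : ι → ℝ) (X : Finset ι) : ℝ := ∑ j ∈ X, c j

/-- Return of a job set. -/
noncomputable def setReturn (r : ι → ι → Prop) (c : ι → ℝ) (X : Finset ι) : ℝ :=
  setCost c X - setBudget r c X

/-- The cbr-preorder on job sets. -/
def cbrLE (r : ι → ι → Prop) (c : ι → ℝ) (X Y : Finset ι) : Prop :=
  (setCost c X < 0 ∧ 0 ≤ setCost c Y) ∨
  (setCost c X < 0 ∧ setCost c Y < 0 ∧ setBudget r c X < setBudget r c Y) ∨
  (setCost c X < 0 ∧ setCost c Y < 0 ∧ setBudget r c X = setBudget r c Y ∧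
    setReturn r c X ≤ setReturn r c Y) ∨
  (0 ≤ setCost c X ∧ 0 ≤ setCost c Y ∧ setReturn r c X ≤ setReturn r c Y)

/-- `J` is an ideal (downward-closed subset) of `r` restricted to `I`. -/
def IsIdealIn (r : ι → ι → Prop) (I J : Finset ι) : Prop :=
  J ⊆ I ∧ ∀ j ∈ J, ∀ i ∈ I, r i j → i ∈ J

/-- `F` is a filter (upward-closed subset) of `r` restricted to `I`. -/
def IsFilterIn (r : ι → ι → Prop) (I F : Finset ι) : Prop :=
  F ⊆ I ∧ ∀ i ∈ F, ∀ j ∈ I, r i j → j ∈ F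

/-- `I` is an interval of `r` on `N`: intersection of an ideal and a filter. -/
def IsIntervalIn (r : ι → ι → Prop) (N I : Finset ι) : Prop :=
  ∃ J F, IsIdealIn r N J ∧ IsFilterIn r N F ∧ I = J ∩ F

/-- An irreducible interval: every ideal of the restricted order is `⪰` the interval. -/
def IsIrreducibleIn (r : ι → ι → Prop) (c : ι → ℝ) (N I : Finset ι) : Prop :=
  IsIntervalIn r N I ∧ ∀ J, IsIdealIn r I J → cbrLE r c I J

/-- A schedule (given as blocks `SS`) in increasing irreducible structure. -/
def IncIrrStructure (r : ι → ι → Prop) (c : ι → ℝ) (N : Finset ι)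
    (SS : List (List ι)) : Prop :=
  IsScheduleOf N SS.flatten ∧ RespectsOrder r SS.flatten ∧
  (∀ S ∈ SS, IsIrreducibleIn r c N S.toFinset ∧ RespectsOrder r S ∧
    listBudget c S = setBudget r c S.toFinset) ∧
  ∀ i j : Fin SS.length, i < j → cbrLE r c (SS.get i).toFinset (SS.get j).toFinset


/-! ### Auxiliary lemmas -/

section Aux

variable {r : ι → ι → Prop} {c : ι → ℝ}

lemma listBudget_nonneg (c : ι → ℝ) (S : List ι) : 0 ≤ listBudget c S := by
  cases S with
  | nil => simp [listBudget]
  | cons a t => simp [listBudget]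

lemma listBudget_append (c : ι → ℝ) (A B : List ι) :
    listBudget c (A ++ B) = max (listBudget c A) (listCost c A + listBudget c B) := by
  induction A with
  | nil =>
    simp [listBudget, listCost, max_eq_right (listBudget_nonneg c B)]
  | cons a t ih =>
    simp only [List.cons_append, listBudget, listCost, List.map_cons, List.sum_cons] at *
    rw [ih, ← max_add_add_left, ← max_assoc, ← add_assoc]

lemma listCost_prefix_le {P S : List ι} (h : P <+: S) :
    listCost c P ≤ listBudget c S := by
  obtain ⟨R, rfl⟩ := h
  rw [listBudget_append]
  have h1 : listCost c P ≤ listCost c P + listBudget c R := by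
    have := listBudget_nonneg c R; linarith
  exact h1.trans (le_max_right _ _)

lemma listBudget_le_of {S : List ι} {B : ℝ} (hB : 0 ≤ B)
    (h : ∀ P, P <+: S → listCost c P ≤ B) : listBudget c S ≤ B := by
  induction S generalizing B with
  | nil => simpa [listBudget] using hB
  | cons a t ih =>
    have ha : c a ≤ B := by
      have := h [a] ⟨t, rfl⟩
      simpa [listCost] using this
    have ht : listBudget c t ≤ B - c a := by
      apply ih
      · have h0 := h [] List.nil_prefix
        simp [listCost] at h0
        linarith
      · intro P hP
        obtain ⟨R, rfl⟩ := hP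
        have := h (a :: (P ++ R).take P.length) ?_
        · simp [listCost, List.take_left] at this ⊢
          linarith [this]
        · exact ⟨(P ++ R).drop P.length, by simp⟩
    simp only [listBudget]
    exact max_le hB (by linarith)

lemma exists_prefix_filter (p : ι → Bool) :
    ∀ {S Q : List ι}, Q <+: S.filter p → ∃ P, P <+: S ∧ Q = P.filter p := by
  intro S
  induction S with
  | nil =>
    intro Q hQ
    simp only [List.filter_nil] at hQ
    exact ⟨[], List.nil_prefix, by simpa using List.prefix_nil.mp hQ⟩
  | cons a t ih =>
    intro Q hQ
    by_cases hpa : p a = true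
    · rw [List.filter_cons_of_pos hpa] at hQ
      cases Q with
      | nil => exact ⟨[], List.nil_prefix, by simp⟩
      | cons b Q' =>
        obtain ⟨rfl, hQ'⟩ := List.cons_prefix_cons.mp hQ
        obtain ⟨P, hP, rfl⟩ := ih hQ'
        refine ⟨b :: P, ?_, by rw [List.filter_cons_of_pos hpa]⟩
        obtain ⟨R, rfl⟩ := hP
        exact ⟨R, rfl⟩
    · rw [List.filter_cons_of_neg hpa] at hQ
      obtain ⟨P, hP, rfl⟩ := ih hQ
      refine ⟨a :: P, ?_, by rw [List.filter_cons_of_neg hpa]⟩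
      obtain ⟨R, rfl⟩ := hP
      exact ⟨R, rfl⟩

lemma respectsOrder_of_pairwise {S : List ι} (hN : S.Nodup)
    (h : S.Pairwise (fun i j => r j i → j = i)) : RespectsOrder r S := by
  intro i j hrij hi hj
  by_contra hlt
  push_neg at hlt
  have hi' : S.idxOf i < S.length := List.idxOf_lt_length_iff.2 hi
  have hj' : S.idxOf j < S.length := List.idxOf_lt_length_iff.2 hj
  have hkey := List.pairwise_iff_get.1 h ⟨S.idxOf j, hj'⟩ ⟨S.idxOf i, hi'⟩ hlt
  rw [List.idxOf_get hi', List.idxOf_get hj'] at hkey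
  have : i = j := hkey hrij
  subst this
  exact absurd rfl hlt.ne

lemma pairwise_of_respectsOrder {S : List ι} (hN : S.Nodup)
    (h : RespectsOrder r S) : S.Pairwise (fun i j => r j i → j = i) := by
  rw [List.pairwise_iff_get]
  intro a b hab hr'
  exfalso
  have := h _ _ hr' (S.get_mem _) (S.get_mem _)
  rw [List.get_idxOf hN, List.get_idxOf hN] at this
  exact absurd (lt_of_le_of_lt this hab) (lt_irrefl _)

lemma exists_schedule (hr : IsPartialOrder ι r) (X : Finset ι) :
    ∃ S, IsScheduleOf X S ∧ S.Pairwise (fun i j => r j i → j = i) := by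
  classical
  haveI := hr
  induction X using Finset.strongInduction with
  | _ X ih =>
    rcases X.eq_empty_or_nonempty with rfl | hX
    · exact ⟨[], ⟨List.nodup_nil, by simp⟩, List.Pairwise.nil⟩
    · obtain ⟨m, hm, hmin⟩ :=
        X.exists_min_image (fun x => (X.filter (fun i => r i x)).card) hX
      have hmin' : ∀ i ∈ X, r i m → i = m := by
        intro i hi hri
        by_contra hne
        have hsubset : X.filter (fun j => r j i) ⊆ X.filter (fun j => r j m) := by
          intro j hj
          simp only [Finset.mem_filter] at *
          exact ⟨hj.1, _root_.trans_of r hj.2 hri⟩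
        have hss : X.filter (fun j => r j i) ⊂ X.filter (fun j => r j m) := by
          rw [Finset.ssubset_iff_of_subset hsubset]
          refine ⟨m, by simp [hm, refl_of r m], ?_⟩
          simp only [Finset.mem_filter, not_and]
          intro _ hmi
          exact hne (antisymm_of r hri hmi)
        exact absurd (hmin i hi) (not_le.2 (Finset.card_lt_card hss))
      obtain ⟨S', ⟨hnd, hmem⟩, hpw⟩ := ih (X.erase m) (Finset.erase_ssubset hm)
      refine ⟨m :: S', ⟨?_, ?_⟩, ?_⟩
      · rw [List.nodup_cons]
        exact ⟨fun hmS => (Finset.notMem_erase m X) ((hmem m).1 hmS), hnd⟩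
      · intro j
        rw [List.mem_cons, hmem, Finset.mem_erase]
        by_cases hjm : j = m
        · subst hjm; simp [hm]
        · simp [hjm]
      · exact List.Pairwise.cons
          (fun x hx h' => hmin' x (Finset.mem_of_mem_erase ((hmem x).1 hx)) h') hpw

lemma IsScheduleOf.toFinset_eq {X : Finset ι} {S : List ι} (h : IsScheduleOf X S) :
    S.toFinset = X := by
  ext a; simp [List.mem_toFinset, h.2]

lemma listCost_eq_setCost {S : List ι} (hnd : S.Nodup) :
    listCost c S = setCost c S.toFinset := (List.sum_toFinset c hnd).symm

lemma setBudget_le {X : Finset ι} {S : List ι} (h1 : IsScheduleOf X S)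
    (h2 : RespectsOrder r S) : setBudget r c X ≤ listBudget c S := by
  apply csInf_le
  · exact ⟨0, fun b ⟨T, _, _, hb⟩ => hb ▸ listBudget_nonneg c T⟩
  · exact ⟨S, h1, h2, rfl⟩

lemma exists_optimal (hr : IsPartialOrder ι r) (c : ι → ℝ) (X : Finset ι) :
    ∃ S, IsScheduleOf X S ∧ RespectsOrder r S ∧ listBudget c S = setBudget r c X := by
  have hne : {b | ∃ S : List ι, IsScheduleOf X S ∧ RespectsOrder r S ∧
      listBudget c S = b}.Nonempty := by
    obtain ⟨S, h1, hpw⟩ := exists_schedule hr X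
    exact ⟨_, S, h1, respectsOrder_of_pairwise h1.1 hpw, rfl⟩
  have hfin : {b | ∃ S : List ι, IsScheduleOf X S ∧ RespectsOrder r S ∧
      listBudget c S = b}.Finite := by
    apply Set.Finite.subset ((X.toList.permutations.finite_toSet).image (listBudget c))
    rintro b ⟨S, ⟨hnd, hmem⟩, -, rfl⟩
    refine ⟨S, ?_, rfl⟩
    show S ∈ {x | x ∈ X.toList.permutations}
    rw [Set.mem_setOf_eq, List.mem_permutations]
    apply List.perm_of_nodup_nodup_toFinset_eq hnd X.nodup_toList
    ext a
    simp [List.mem_toFinset, hmem, Finset.mem_toList]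
  have := hne.csInf_mem hfin
  obtain ⟨S, h1, h2, h3⟩ := this
  exact ⟨S, h1, h2, h3⟩

lemma prefix_mem_of_rel {S P : List ι} {i j : ι}
    (hpw : S.Pairwise (fun i j => r j i → j = i)) (hP : P <+: S)
    (hj : j ∈ P) (hi : i ∈ S) (hrij : r i j) : i ∈ P := by
  obtain ⟨R, rfl⟩ := hP
  rcases List.mem_append.1 hi with h | h
  · exact h
  · have := (List.pairwise_append.1 hpw).2.2 j hj i h hrij
    exact this ▸ hj

end Aux

theorem irreducible_large_return_filter (r : ι → ι → Prop) (hr : IsPartialOrder ι r)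
    (c : ι → ℝ) (N I : Finset ι) (hI : IsIrreducibleIn r c N I) :
    ∀ F, IsFilterIn r I F → setReturn r c I < setReturn r c F → setCost c F ≤ 0 := by
  classical
  intro F hFfil hret
  obtain ⟨hFI, hFup⟩ := hFfil
  set J : Finset ι := I \ F with hJdef
  have hJI : J ⊆ I := Finset.sdiff_subset
  have hJideal : IsIdealIn r I J := by
    refine ⟨hJI, ?_⟩
    intro j hj i hi hrij
    rw [hJdef, Finset.mem_sdiff] at hj ⊢
    exact ⟨hi, fun hiF => hj.2 (hFup i hiF j hj.1 hrij)⟩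
  have hcost : setCost c J + setCost c F = setCost c I := Finset.sum_sdiff hFI
  obtain ⟨SJ, hSJ, hSJO, hSJb⟩ := exists_optimal hr c J
  obtain ⟨SF, hSF, hSFO, hSFb⟩ := exists_optimal hr c F
  obtain ⟨S, hS, hSO, hSb⟩ := exists_optimal hr c I
  have hSpw := pairwise_of_respectsOrder hS.1 hSO
  have hSmem : ∀ x, x ∈ S ↔ x ∈ I := hS.2
  have hJFdisj : ∀ a, a ∈ SJ → a ∉ SF := by
    intro a haJ haF
    have h1 : a ∈ J := (hSJ.2 a).1 haJ
    have h2 : a ∈ F := (hSF.2 a).1 haF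
    rw [hJdef, Finset.mem_sdiff] at h1
    exact h1.2 h2
  have hcat_sched : IsScheduleOf I (SJ ++ SF) := by
    constructor
    · rw [List.nodup_append]; exact ⟨hSJ.1, hSF.1, fun a ha b hb hab => hJFdisj a ha (hab ▸ hb)⟩
    · intro j
      rw [List.mem_append, hSJ.2, hSF.2, hJdef, Finset.mem_sdiff]
      constructor
      · rintro (⟨h, _⟩ | h)
        · exact h
        · exact hFI h
      · intro hjI
        by_cases hjF : j ∈ F
        · exact Or.inr hjF
        · exact Or.inl ⟨hjI, hjF⟩
  have hcat_ord : RespectsOrder r (SJ ++ SF) := by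
    apply respectsOrder_of_pairwise hcat_sched.1
    rw [List.pairwise_append]
    refine ⟨pairwise_of_respectsOrder hSJ.1 hSJO,
      pairwise_of_respectsOrder hSF.1 hSFO, ?_⟩
    intro a ha b hb hrba
    exfalso
    have haJ : a ∈ J := (hSJ.2 a).1 ha
    have hbF : b ∈ F := (hSF.2 b).1 hb
    have haF : a ∈ F := hFup b hbF a (hJI haJ) hrba
    rw [hJdef, Finset.mem_sdiff] at haJ
    exact haJ.2 haF
  have key1 : setBudget r c I ≤ max (setBudget r c J) (setCost c J + setBudget r c F) := by
    have h := setBudget_le (c := c) hcat_sched hcat_ord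
    rw [listBudget_append, hSJb, hSFb, listCost_eq_setCost hSJ.1, hSJ.toFinset_eq] at h
    exact h
  have key2 : setCost c J + setBudget r c F < setBudget r c I := by
    simp only [setReturn] at hret
    linarith [hcost]
  have key3 : setBudget r c I ≤ setBudget r c J := by
    rcases le_max_iff.1 key1 with h | h
    · exact h
    · linarith
  rcases hI.2 J hJideal with ⟨hcI, hcJ⟩ | ⟨hcI, hcJ, hbIJ⟩ | ⟨hcI, hcJ, hbeq, hrle⟩ |
    ⟨hcI, hcJ, hrle⟩
  · linarith [hcost]
  · -- hard branch: c(I) < 0, c(J) < 0, b(I) < b(J)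
    obtain ⟨P0, hP0mem, hP0min⟩ :=
      S.inits.toFinset.exists_min_image (fun P => listCost c (P.filter (fun x => x ∈ F)))
        ⟨[], by simp [List.mem_toFinset, List.mem_inits]⟩
    rw [List.mem_toFinset, List.mem_inits] at hP0mem
    have hP0min' : ∀ P, P <+: S →
        listCost c (P0.filter (fun x => x ∈ F)) ≤ listCost c (P.filter (fun x => x ∈ F)) := by
      intro P hP
      exact hP0min P (by rw [List.mem_toFinset, List.mem_inits]; exact hP)
    set g0 := listCost c (P0.filter (fun x => x ∈ F)) with hg0def
    have hg0 : g0 ≤ 0 := by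
      have h := hP0min' [] List.nil_prefix
      simpa [listCost] using h
    have hP0nd : P0.Nodup := List.Nodup.sublist hP0mem.sublist hS.1
    set P0F : Finset ι := (P0.filter (fun x => x ∈ F)).toFinset with hP0Fdef
    set J2 : Finset ι := J ∪ P0F with hJ2def
    have hP0F_sub_I : P0F ⊆ I := by
      intro x hx
      rw [hP0Fdef, List.mem_toFinset, List.mem_filter] at hx
      exact (hSmem x).1 (hP0mem.sublist.subset hx.1)
    have hP0F_sub_F : P0F ⊆ F := by
      intro x hx
      rw [hP0Fdef, List.mem_toFinset, List.mem_filter] at hx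
      simpa using hx.2
    have hJ2I : J2 ⊆ I := Finset.union_subset hJI hP0F_sub_I
    have hJP0F_disj : Disjoint J P0F := by
      rw [Finset.disjoint_left]
      intro a haJ haP
      rw [hJdef, Finset.mem_sdiff] at haJ
      exact haJ.2 (hP0F_sub_F haP)
    have hcJ2 : setCost c J2 = setCost c J + g0 := by
      rw [hJ2def]
      show ∑ j ∈ J ∪ P0F, c j = setCost c J + g0
      rw [Finset.sum_union hJP0F_disj]
      congr 1
      rw [hg0def, listCost_eq_setCost (hP0nd.filter _), hP0Fdef]
      rfl
    have hJ2ideal : IsIdealIn r I J2 := by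
      refine ⟨hJ2I, ?_⟩
      intro j hj i hi hrij
      rw [hJ2def, Finset.mem_union] at hj ⊢
      rcases hj with hj | hj
      · left
        rw [hJdef, Finset.mem_sdiff] at hj ⊢
        exact ⟨hi, fun hiF => hj.2 (hFup i hiF j hj.1 hrij)⟩
      · have hjP0 : j ∈ P0 := by
          rw [hP0Fdef, List.mem_toFinset, List.mem_filter] at hj
          exact hj.1
        have hiP0 : i ∈ P0 := prefix_mem_of_rel hSpw hP0mem hjP0 ((hSmem i).2 hi) hrij
        by_cases hiF : i ∈ F
        · right
          rw [hP0Fdef, List.mem_toFinset, List.mem_filter]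
          exact ⟨hiP0, by simpa using hiF⟩
        · left
          rw [hJdef, Finset.mem_sdiff]
          exact ⟨hi, hiF⟩
    set T := S.filter (fun x => x ∈ J2) with hTdef
    have hTsched : IsScheduleOf J2 T := by
      constructor
      · exact List.Nodup.filter _ hS.1
      · intro j
        rw [hTdef, List.mem_filter]
        constructor
        · rintro ⟨_, h⟩
          simpa using h
        · intro h
          exact ⟨(hSmem j).2 (hJ2I h), by simpa using h⟩
    have hTord : RespectsOrder r T :=
      respectsOrder_of_pairwise hTsched.1 (List.Pairwise.sublist (List.filter_sublist (l := S)) hSpw)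
    have hbI0 : 0 ≤ setBudget r c I := hSb ▸ listBudget_nonneg c S
    have hTbound : listBudget c T ≤ setBudget r c I := by
      apply listBudget_le_of hbI0
      intro Q hQ
      obtain ⟨P, hP, rfl⟩ := exists_prefix_filter _ hQ
      have hPcost : listCost c P ≤ setBudget r c I := hSb ▸ listCost_prefix_le hP
      rcases List.prefix_or_prefix_of_prefix hP hP0mem with hPP0 | hP0P
      · have heq : P.filter (fun x => x ∈ J2) = P := by
          rw [List.filter_eq_self]
          intro a ha
          have haI : a ∈ I := (hSmem a).1 (hP.sublist.subset ha)
          simp only [decide_eq_true_eq]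
          rw [hJ2def, Finset.mem_union]
          by_cases haF : a ∈ F
          · right
            rw [hP0Fdef, List.mem_toFinset, List.mem_filter]
            exact ⟨hPP0.sublist.subset ha, by simpa using haF⟩
          · left
            rw [hJdef, Finset.mem_sdiff]
            exact ⟨haI, haF⟩
        rw [heq]
        exact hPcost
      · have hPnd : P.Nodup := List.Nodup.sublist hP.sublist hS.1
        have e1 : listCost c (P.filter (fun x => x ∈ J2))
            = setCost c (P.toFinset.filter (fun x => x ∈ J2)) := by
          rw [listCost_eq_setCost (hPnd.filter _), List.toFinset_filter]
          simp
        have e2 : listCost c (P.filter (fun x => x ∈ F))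
            = setCost c (P.toFinset.filter (fun x => x ∈ F)) := by
          rw [listCost_eq_setCost (hPnd.filter _), List.toFinset_filter]
          simp
        have split : P.toFinset.filter (fun x => x ∈ J2)
            = (P.toFinset.filter (fun x => x ∉ F)) ∪ P0F := by
          ext x
          rw [Finset.mem_union, Finset.mem_filter, Finset.mem_filter]
          constructor
          · rintro ⟨hxP, hxJ2⟩
            rw [hJ2def, Finset.mem_union] at hxJ2
            rcases hxJ2 with hx | hx
            · left
              rw [hJdef, Finset.mem_sdiff] at hx
              exact ⟨hxP, hx.2⟩
            · right; exact hx
          · rintro (⟨hxP, hxF⟩ | hx)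
            · have hxI : x ∈ I := (hSmem x).1 (hP.sublist.subset (List.mem_toFinset.1 hxP))
              refine ⟨hxP, ?_⟩
              rw [hJ2def, Finset.mem_union]
              left
              rw [hJdef, Finset.mem_sdiff]
              exact ⟨hxI, hxF⟩
            · have hxP0 : x ∈ P0 := by
                rw [hP0Fdef, List.mem_toFinset, List.mem_filter] at hx
                exact hx.1
              refine ⟨List.mem_toFinset.2 (hP0P.sublist.subset hxP0), ?_⟩
              rw [hJ2def, Finset.mem_union]
              right; exact hx
        have hdisj2 : Disjoint (P.toFinset.filter (fun x => x ∉ F)) P0F := by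
          rw [Finset.disjoint_left]
          intro a ha haP
          rw [Finset.mem_filter] at ha
          exact ha.2 (hP0F_sub_F haP)
        have e3 : setCost c (P.toFinset.filter (fun x => x ∈ J2))
            = setCost c (P.toFinset.filter (fun x => x ∉ F)) + g0 := by
          rw [split]
          show ∑ j ∈ _ ∪ _, c j = _
          rw [Finset.sum_union hdisj2]
          congr 1
          rw [hg0def, listCost_eq_setCost (hP0nd.filter _), hP0Fdef]
          rfl
        have e4 : setCost c (P.toFinset.filter (fun x => x ∈ F))
            + setCost c (P.toFinset.filter (fun x => x ∉ F)) = listCost c P := by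
          rw [listCost_eq_setCost hPnd]
          exact Finset.sum_filter_add_sum_filter_not P.toFinset (fun x => x ∈ F) c
        have e5 : g0 ≤ setCost c (P.toFinset.filter (fun x => x ∈ F)) := by
          rw [← e2]
          exact hP0min' P hP
        rw [e1, e3]
        linarith
    have hbJ2 : setBudget r c J2 ≤ setBudget r c I :=
      (setBudget_le hTsched hTord).trans hTbound
    rcases hI.2 J2 hJ2ideal with ⟨_, hcJ2pos⟩ | ⟨_, _, hblt⟩ | ⟨_, _, hbeq2, hrle2⟩ |
      ⟨hge, _, _⟩
    · rw [hcJ2] at hcJ2pos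
      linarith
    · linarith
    · simp only [setReturn] at hrle2
      rw [hcJ2] at hrle2
      linarith [hcost]
    · linarith
  · simp only [setReturn] at hrle
    linarith [hcost]
  · simp only [setReturn] at hrle
    linarith [hcost, key3]
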